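/- Assume C_HN < C_HA and set κ = (C_L − C_HN)/(C_HA − C_HN). Suppose τ ∈ [0,1] satisfies: V'(p) = HP'-value(p) for all p ≤ τ, V'(p) = LP'-value(p) for all p ≥ τ, T(τ) ≥ τ, and λ'NA ≥ τ. Then τ = κ. -/

import Mathlib

/-- Two-state consumer model with coupon-dependent transitions:
LP transitions `lNA ≤ lAA`, HP transitions `lNA' ≤ lAA'` with `lNA < lNA'`
and `lAA < lAA'`, costs `CHN ≤ CL ≤ CHA`, discount factor `β ∈ (0,1)`. -/
structure CouponModelDep where
  lNA : ℝ
  lAA : ℝ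
  lNA' : ℝ
  lAA' : ℝ
  CHN : ℝ
  CL : ℝ
  CHA : ℝ
  β : ℝ
  lNA_nonneg : 0 ≤ lNA
  lNA_le_lAA : lNA ≤ lAA
  lAA_le_one : lAA ≤ 1
  lNA'_nonneg : 0 ≤ lNA'
  lNA'_le_lAA' : lNA' ≤ lAA'
  lAA'_le_one : lAA' ≤ 1
  lNA_lt_lNA' : lNA < lNA'
  lAA_lt_lAA' : lAA < lAA'
  CHN_le_CL : CHN ≤ CL
  CL_le_CHA : CL ≤ CHA
  β_pos : 0 < β
  β_lt_one : β < 1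

namespace CouponModelDep

/-- Belief-update map under an LP coupon: `T(p) = (1-p)·λNA + p·λAA`. -/
noncomputable def T (M : CouponModelDep) (p : ℝ) : ℝ := (1 - p) * M.lNA + p * M.lAA

/-- Belief-update map under an HP coupon: `T'(p) = (1-p)·λ'NA + p·λ'AA`. -/
noncomputable def T' (M : CouponModelDep) (p : ℝ) : ℝ := (1 - p) * M.lNA' + p * M.lAA'

/-- Coupon-dependent Bellman operator. -/
noncomputable def B (M : CouponModelDep) (f : ℝ → ℝ) (p : ℝ) : ℝ :=
  min (M.CL + M.β * f (M.T p))
    ((1 - p) * M.CHN + p * M.CHA + M.β * ((1 - p) * f M.lNA' + p * f M.lAA'))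

/-- A function `f : ℝ → ℝ` is bounded on the belief space `[0,1]`. -/
def IsBdd (f : ℝ → ℝ) : Prop := ∃ C : ℝ, ∀ p ∈ Set.Icc (0:ℝ) 1, |f p| ≤ C

/-- `V` is a bounded fixed point of the coupon-dependent Bellman operator on `[0,1]`. -/
def IsValue (M : CouponModelDep) (V : ℝ → ℝ) : Prop :=
  IsBdd V ∧ ∀ p ∈ Set.Icc (0:ℝ) 1, V p = M.B V p

/-- Value of offering the low-privacy coupon at belief `p`. -/
noncomputable def LPval (M : CouponModelDep) (V : ℝ → ℝ) (p : ℝ) : ℝ :=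
  M.CL + M.β * V (M.T p)

/-- Value of offering the high-privacy coupon at belief `p`. -/
noncomputable def HPval (M : CouponModelDep) (V : ℝ → ℝ) (p : ℝ) : ℝ :=
  (1 - p) * M.CHN + p * M.CHA + M.β * ((1 - p) * V M.lNA' + p * V M.lAA')

end CouponModelDep

/-- If `τ ∈ [0,1]` is a threshold for the coupon-dependent value function with
`T(τ) ≥ τ` and `λ'NA ≥ τ`, then `τ = κ = (C_L - C_HN)/(C_HA - C_HN)`. -/
theorem dep_threshold_eq_kappa (M : CouponModelDep) (hC : M.CHN < M.CHA)
    (V : ℝ → ℝ) (hV : M.IsValue V)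
    (τ : ℝ) (hτ : τ ∈ Set.Icc (0:ℝ) 1)
    (hHP : ∀ p ∈ Set.Icc (0:ℝ) 1, p ≤ τ → V p = M.HPval V p)
    (hLP : ∀ p ∈ Set.Icc (0:ℝ) 1, τ ≤ p → V p = M.LPval V p)
    (hT : τ ≤ M.T τ) (hNA' : τ ≤ M.lNA') :
    τ = (M.CL - M.CHN) / (M.CHA - M.CHN) := by
  obtain ⟨⟨Cb, hCb⟩, _⟩ := hV
  have hb0 : (0:ℝ) < M.β := M.β_pos
  have hb1 : M.β < 1 := M.β_lt_one
  have hb1' : (1:ℝ) - M.β ≠ 0 := by linarith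
  set v : ℝ := M.CL / (1 - M.β) with hv
  have hveq : M.CL + M.β * v = v := by rw [hv]; linear_combination -(div_mul_cancel₀ M.CL hb1')
  have hTmem : ∀ p ∈ Set.Icc (0:ℝ) 1, M.T p ∈ Set.Icc (0:ℝ) 1 := by
    intro p hp
    obtain ⟨h0, h1⟩ := hp
    constructor
    · simp only [CouponModelDep.T]
      nlinarith [M.lNA_nonneg, M.lNA_le_lAA]
    · simp only [CouponModelDep.T]
      nlinarith [M.lAA_le_one, M.lNA_le_lAA]
  have hTge : ∀ p, τ ≤ p → τ ≤ M.T p := by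
    intro p hp
    have h2 : M.T τ ≤ M.T p := by
      simp only [CouponModelDep.T]
      nlinarith [M.lNA_le_lAA]
    linarith
  have key : ∀ n : ℕ, ∀ p ∈ Set.Icc (0:ℝ) 1, τ ≤ p →
      |V p - v| ≤ M.β ^ n * (Cb + |v|) := by
    intro n
    induction n with
    | zero =>
      intro p hp hpt
      have h1 := hCb p hp
      have h2 : |V p - v| ≤ |V p| + |v| := abs_sub (V p) v
      simp only [pow_zero, one_mul]
      linarith
    | succ n ih =>
      intro p hp hpt
      have h1 : V p = M.CL + M.β * V (M.T p) := hLP p hp hpt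
      have h2 := ih (M.T p) (hTmem p hp) (hTge p hpt)
      have h3 : V p - v = M.β * (V (M.T p) - v) := by rw [h1]; linarith [hveq]
      rw [h3, abs_mul, abs_of_pos hb0, pow_succ, mul_comm (M.β ^ n) M.β, mul_assoc]
      exact mul_le_mul_of_nonneg_left h2 hb0.le
  have hVeq : ∀ p ∈ Set.Icc (0:ℝ) 1, τ ≤ p → V p = v := by
    intro p hp hpt
    have h := fun n => key n p hp hpt
    have hlim : Filter.Tendsto (fun n : ℕ => M.β ^ n * (Cb + |v|))
        Filter.atTop (nhds 0) := by
      have := tendsto_pow_atTop_nhds_zero_of_lt_one hb0.le hb1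
      simpa using this.mul_const (Cb + |v|)
    have hle : |V p - v| ≤ 0 := ge_of_tendsto' hlim h
    have := abs_nonneg (V p - v)
    have : |V p - v| = 0 := le_antisymm hle this
    have := abs_eq_zero.mp this
    linarith
  have hNAmem : M.lNA' ∈ Set.Icc (0:ℝ) 1 :=
    ⟨M.lNA'_nonneg, M.lNA'_le_lAA'.trans M.lAA'_le_one⟩
  have hAAmem : M.lAA' ∈ Set.Icc (0:ℝ) 1 :=
    ⟨M.lNA'_nonneg.trans M.lNA'_le_lAA', M.lAA'_le_one⟩
  have hVNA : V M.lNA' = v := hVeq _ hNAmem hNA'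
  have hVAA : V M.lAA' = v := hVeq _ hAAmem (hNA'.trans M.lNA'_le_lAA')
  have hVtau : V τ = v := hVeq τ hτ le_rfl
  have hHPτ : V τ = M.HPval V τ := hHP τ hτ le_rfl
  have : v = (1 - τ) * M.CHN + τ * M.CHA + M.β * v := by
    conv_lhs => rw [← hVtau, hHPτ]
    simp only [CouponModelDep.HPval, hVNA, hVAA]
    ring
  have hCL : (1 - τ) * M.CHN + τ * M.CHA = M.CL := by nlinarith [hveq]
  have hd : M.CHA - M.CHN ≠ 0 := by linarith
  field_simp
  linarith
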